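/- For all nonnegative integers m₁, m₂, with p = (m₁+m₂+1)/2, and all real b with b ≠ 0 and b ≠ -1: ∑_{k=0}^{m₁} ∑_{l=0}^{m₁-k} binom(m₂+l, m₂) * (-1)^k * binom(p, k) * (1-b)^k * (1+b)^{-l} = b^{m₁} * ∑_{k=0}^{m₁} ∑_{l=0}^{m₁-k} binom(m₂+l, m₂) * binom(p, k) * (1-b)^k * (1+b)^{-l} * b^{l-k}. -/

import Mathlib

open Finset

/-- Generalized binomial coefficient `x(x-1)⋯(x-k+1)/k!` with real upper argument. -/
noncomputable def gchoose (x : ℝ) (k : ℕ) : ℝ :=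
  (∏ i ∈ Finset.range k, (x - i)) / (Nat.factorial k)

lemma smeval_descPoch (x : ℝ) : ∀ k : ℕ, (descPochhammer ℤ k).smeval x = ∏ i ∈ range k, (x - i)
  | 0 => by simp [descPochhammer_zero, Polynomial.smeval_one]
  | (k+1) => by
    rw [descPochhammer_succ_right, Polynomial.smeval_mul, smeval_descPoch x k,
      prod_range_succ, Polynomial.smeval_sub, Polynomial.smeval_X, Polynomial.smeval_natCast]
    simp

lemma gchoose_eq (x : ℝ) (k : ℕ) : gchoose x k = Ring.choose x k := by
  have h := Ring.descPochhammer_eq_factorial_smul_choose (R := ℝ) x k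
  rw [smeval_descPoch, nsmul_eq_mul] at h
  have hk : (k.factorial : ℝ) ≠ 0 := Nat.cast_ne_zero.mpr k.factorial_ne_zero
  rw [gchoose, h]
  field_simp

lemma vander (x y : ℝ) (n : ℕ) :
    ∑ k ∈ range (n+1), Ring.choose x k * Ring.choose y (n-k) = Ring.choose (x+y) n := by
  rw [Ring.add_choose_eq n (Commute.all x y),
    Finset.Nat.sum_antidiagonal_eq_sum_range_succ_mk]

lemma trinom (x : ℝ) (i u : ℕ) :
    Ring.choose x (i+u) * ((i+u).choose i : ℝ) = Ring.choose x i * Ring.choose (x - i) u := by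
  have h := Ring.choose_smul_choose (R := ℝ) x (Nat.le_add_right i u)
  rw [nsmul_eq_mul, Nat.add_sub_cancel_left] at h
  rw [mul_comm, h]

lemma rc_neg_succ (m l : ℕ) : Ring.choose (-(m:ℝ)-1) l = (-1)^l * ((m+l).choose m : ℝ) := by
  have aux : ∀ j : ℕ, (∏ i ∈ range j, ((m:ℝ)+1+i)) * m.factorial = (m+j).factorial := by
    intro j
    induction j with
    | zero => simp
    | succ j ih =>
      rw [prod_range_succ, mul_right_comm, ih]
      push_cast [← Nat.add_assoc, Nat.factorial_succ (m+j)]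
      ring
  have h1 : (∏ i ∈ range l, (-(m:ℝ)-1-i)) = (-1)^l * ∏ i ∈ range l, ((m:ℝ)+1+i) := by
    have he : ∀ i ∈ range l, (-(m:ℝ)-1-i) = (-1) * ((m:ℝ)+1+i) := fun i _ => by ring
    rw [prod_congr rfl he, prod_mul_distrib, prod_const, card_range]
  have h2 : ((m+l).choose m : ℝ) * (l.factorial * m.factorial) = ((m+l).factorial : ℝ) := by
    rw_mod_cast [← Nat.add_choose_mul_factorial_mul_factorial m l]
    rw [Nat.choose_symm_add]; ring
  have hm : (m.factorial : ℝ) ≠ 0 := Nat.cast_ne_zero.mpr m.factorial_ne_zero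
  have hl : (l.factorial : ℝ) ≠ 0 := Nat.cast_ne_zero.mpr l.factorial_ne_zero
  have h4 : (∏ i ∈ range l, ((m:ℝ)+1+i)) = ((m+l).choose m : ℝ) * l.factorial := by
    apply mul_right_cancel₀ hm
    rw [aux l, ← h2]; ring
  rw [← gchoose_eq, gchoose, h1, h4]
  field_simp

lemma rc_neg_one (j : ℕ) : Ring.choose (-1 : ℝ) j = (-1)^j := by
  have := rc_neg_succ 0 j
  simpa using this

noncomputable def Eser (α x : ℝ) : PowerSeries ℝ :=
  PowerSeries.mk fun k => Ring.choose x k * α ^ k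

@[simp] lemma coeff_Eser (α x : ℝ) (n : ℕ) :
    PowerSeries.coeff n (Eser α x) = Ring.choose x n * α ^ n := PowerSeries.coeff_mk n _

lemma Eser_mul (α x y : ℝ) : Eser α x * Eser α y = Eser α (x + y) := by
  ext n
  rw [PowerSeries.coeff_mul, Finset.Nat.sum_antidiagonal_eq_sum_range_succ_mk, coeff_Eser,
    ← vander x y n, sum_mul]
  refine sum_congr rfl fun k hk => ?_
  have hkn : k ≤ n := Nat.lt_succ_iff.mp (mem_range.mp hk)
  rw [coeff_Eser, coeff_Eser]
  simp only []
  rw [show Ring.choose x k * α ^ k * (Ring.choose y (n-k) * α ^ (n-k))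
      = Ring.choose x k * Ring.choose y (n-k) * (α ^ k * α ^ (n-k)) by ring,
    ← pow_add, Nat.add_sub_cancel' hkn]

lemma Eser_exp_zero (α : ℝ) : Eser α 0 = 1 := by
  ext n
  rw [coeff_Eser, PowerSeries.coeff_one]
  rcases Nat.eq_zero_or_pos n with h | h
  · subst h; simp [Ring.choose_zero_right]
  · rw [Ring.choose_zero_pos ℝ h]
    simp [Nat.pos_iff_ne_zero.mp h]

lemma Eser_pow (c : ℝ) (n : ℕ) : (Eser c (-1))^n = Eser c (-(n:ℝ)) := by
  induction n with
  | zero => simp [Eser_exp_zero]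
  | succ n ih =>
    have h : (-(n:ℝ)) + -1 = -((n+1:ℕ):ℝ) := by push_cast; ring
    rw [pow_succ, ih, Eser_mul, h]

lemma sum_tri (m : ℕ) (g : ℕ → ℕ → ℝ) :
    ∑ n ∈ range (m+1), ∑ k ∈ range (n+1), g k (n - k)
      = ∑ k ∈ range (m+1), ∑ l ∈ range (m - k + 1), g k l := by
  induction m with
  | zero => simp
  | succ m ih =>
    rw [sum_range_succ (fun n => ∑ k ∈ range (n+1), g k (n-k)), ih]
    rw [sum_range_succ (fun k => ∑ l ∈ range (m + 1 - k + 1), g k l)]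
    have hsplit : ∀ k ∈ range (m+1), ∑ l ∈ range (m + 1 - k + 1), g k l
        = ∑ l ∈ range (m - k + 1), g k l + g k (m + 1 - k) := by
      intro k hk
      have hkm : k ≤ m := Nat.lt_succ_iff.mp (mem_range.mp hk)
      have : m + 1 - k = (m - k) + 1 := by omega
      rw [this, sum_range_succ]
    rw [sum_congr rfl hsplit, sum_add_distrib]
    rw [sum_range_succ (fun k => g k (m + 1 - k))]
    simp only [Nat.sub_self, Nat.zero_add, zero_add, Finset.sum_range_one]
    abel

lemma CE (c α x : ℝ) (j : ℕ) :
    ∑ n ∈ range (j+1), Ring.choose x n * (α+c)^n * Ring.choose (-x) (j-n) * c^(j-n)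
      = ∑ n ∈ range (j+1), Ring.choose x n * α^n * Ring.choose (-(n:ℝ)) (j-n) * c^(j-n) := by
  set G : ℕ → ℕ → ℝ := fun k l => Ring.choose x (k+l) * ((k+l).choose k : ℝ) * α^k * c^(j-k)
    * Ring.choose (-x) (j-(k+l)) with hG
  have step1 : ∀ n ∈ range (j+1),
      Ring.choose x n * (α+c)^n * Ring.choose (-x) (j-n) * c^(j-n)
        = ∑ i ∈ range (n+1), G i (n-i) := by
    intro n hn
    have hnj : n ≤ j := Nat.lt_succ_iff.mp (mem_range.mp hn)
    have h1 : Ring.choose x n * (α+c)^n * Ring.choose (-x) (j-n) * c^(j-n)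
        = ∑ i ∈ range (n+1), Ring.choose x n * Ring.choose (-x) (j-n) * c^(j-n)
          * (α^i * c^(n-i) * ((n.choose i : ℝ))) := by
      rw [← mul_sum, ← add_pow]
      ring
    rw [h1]
    refine sum_congr rfl fun i hi => ?_
    have hin : i ≤ n := Nat.lt_succ_iff.mp (mem_range.mp hi)
    have hadd : i + (n - i) = n := Nat.add_sub_cancel' hin
    have hc : c^(j-n) * c^(n-i) = c^(j-i) := by
      rw [← pow_add]
      congr 1
      omega
    rw [hG]
    simp only [hadd]
    rw [← hc]
    ring
  rw [sum_congr rfl step1, sum_tri j G]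
  refine sum_congr rfl fun i hi => ?_
  have hij : i ≤ j := Nat.lt_succ_iff.mp (mem_range.mp hi)
  have step2 : ∀ u ∈ range (j-i+1), G i u
      = Ring.choose x i * α^i * c^(j-i) * (Ring.choose (x - i) u * Ring.choose (-x) ((j-i)-u)) := by
    intro u hu
    have hji : j - (i+u) = (j-i) - u := by omega
    rw [hG]
    simp only [hji]
    rw [show Ring.choose x (i+u) * ((i+u).choose i : ℝ) * α^i * c^(j-i) * Ring.choose (-x) (j-i-u)
        = (Ring.choose x (i+u) * ((i+u).choose i : ℝ)) * (α^i * c^(j-i) * Ring.choose (-x) (j-i-u)) from by ring,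
      trinom x i u]
    ring
  rw [sum_congr rfl step2, ← mul_sum, vander (x - i) (-x) (j-i),
    show x - (i:ℝ) + -x = -(i:ℝ) from by ring]
  ring

noncomputable def psi (c : ℝ) : PowerSeries ℝ := PowerSeries.X * Eser c (-1)

lemma psi_pow (c : ℝ) (n : ℕ) : (psi c)^n = PowerSeries.X^n * Eser c (-(n:ℝ)) := by
  rw [psi, mul_pow, Eser_pow]

lemma coeff_psi_pow (c : ℝ) (n j : ℕ) :
    PowerSeries.coeff j ((psi c)^n)
      = if n ≤ j then Ring.choose (-(n:ℝ)) (j-n) * c^(j-n) else 0 := by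
  rw [psi_pow, PowerSeries.coeff_X_pow_mul']
  split_ifs with h
  · rw [coeff_Eser]
  · rfl

lemma coeff_aeval_psi (c : ℝ) (q : Polynomial ℝ) (j : ℕ) :
    PowerSeries.coeff j (Polynomial.aeval (psi c) q)
      = ∑ n ∈ range (j+1), q.coeff n * Ring.choose (-(n:ℝ)) (j-n) * c^(j-n) := by
  rw [Polynomial.aeval_eq_sum_range (x := psi c), map_sum]
  have hterm : ∀ i, PowerSeries.coeff j (q.coeff i • (psi c)^i)
      = q.coeff i * PowerSeries.coeff j ((psi c)^i) := fun i => by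
    rw [PowerSeries.coeff_smul, smul_eq_mul]
  simp only [hterm]
  set M := q.natDegree + 1 + (j + 1) with hM
  have h1 : ∑ i ∈ range (q.natDegree + 1), q.coeff i * PowerSeries.coeff j ((psi c)^i)
      = ∑ i ∈ range M, q.coeff i * PowerSeries.coeff j ((psi c)^i) := by
    apply Finset.sum_subset (Finset.range_subset_range.mpr (by omega))
    intro i _ hi
    have : q.natDegree < i := by
      simp only [mem_range, not_lt] at hi ⊢; omega
    rw [Polynomial.coeff_eq_zero_of_natDegree_lt this, zero_mul]
  have h2 : ∑ i ∈ range (j+1), q.coeff i * PowerSeries.coeff j ((psi c)^i)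
      = ∑ i ∈ range M, q.coeff i * PowerSeries.coeff j ((psi c)^i) := by
    apply Finset.sum_subset (Finset.range_subset_range.mpr (by omega))
    intro i _ hi
    have hji : ¬ (i ≤ j) := by
      simp only [mem_range, not_lt] at hi; omega
    rw [coeff_psi_pow, if_neg hji, mul_zero]
  rw [h1, ← h2]
  refine sum_congr rfl fun i hi => ?_
  have : i ≤ j := Nat.lt_succ_iff.mp (mem_range.mp hi)
  rw [coeff_psi_pow, if_pos this, ← mul_assoc]

lemma factor_comp (c α x : ℝ) (N j : ℕ) (hj : j ≤ N) :
    PowerSeries.coeff j (Polynomial.aeval (psi c) (PowerSeries.trunc (N+1) (Eser α x)))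
      = PowerSeries.coeff j (Eser (α+c) x * Eser c (-x)) := by
  have h1 : PowerSeries.coeff j (Polynomial.aeval (psi c) (PowerSeries.trunc (N+1) (Eser α x)))
      = ∑ n ∈ range (j+1), Ring.choose x n * α^n * Ring.choose (-(n:ℝ)) (j-n) * c^(j-n) := by
    rw [coeff_aeval_psi]
    refine sum_congr rfl fun n hn => ?_
    have hnj : n ≤ j := Nat.lt_succ_iff.mp (mem_range.mp hn)
    rw [PowerSeries.coeff_trunc, if_pos (by omega), coeff_Eser]
  have h2 : PowerSeries.coeff j (Eser (α+c) x * Eser c (-x))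
      = ∑ n ∈ range (j+1), Ring.choose x n * (α+c)^n * Ring.choose (-x) (j-n) * c^(j-n) := by
    rw [PowerSeries.coeff_mul, Finset.Nat.sum_antidiagonal_eq_sum_range_succ_mk]
    refine sum_congr rfl fun n hn => ?_
    rw [coeff_Eser, coeff_Eser]
    ring
  rw [h1, h2, CE]

lemma coeff_mul_congr (n : ℕ) (F F' G G' : PowerSeries ℝ)
    (hF : ∀ i ≤ n, PowerSeries.coeff i F = PowerSeries.coeff i F')
    (hG : ∀ i ≤ n, PowerSeries.coeff i G = PowerSeries.coeff i G') :
    ∀ j ≤ n, PowerSeries.coeff j (F*G) = PowerSeries.coeff j (F'*G') := by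
  intro j hj
  rw [PowerSeries.coeff_mul, PowerSeries.coeff_mul]
  refine sum_congr rfl fun p hp => ?_
  have hpj := Finset.HasAntidiagonal.mem_antidiagonal.mp hp
  rw [hF p.1 (by omega), hG p.2 (by omega)]

lemma key (c : ℝ) (N : ℕ) (q : Polynomial ℝ) :
    PowerSeries.coeff N (Polynomial.aeval (psi c) q * (Eser c (N:ℝ) * Eser c (-1)))
      = q.coeff N := by
  have hco : ∀ i : ℕ, PowerSeries.coeff N ((psi c)^i * (Eser c (N:ℝ) * Eser c (-1)))
      = if i = N then 1 else 0 := by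
    intro i
    rw [psi_pow, mul_assoc, Eser_mul, Eser_mul, PowerSeries.coeff_X_pow_mul']
    rcases lt_trichotomy i N with h | h | h
    · rw [if_pos (le_of_lt h), if_neg (Nat.ne_of_lt h)]
      have hcast : -((i:ℕ):ℝ) + ((N:ℝ) + -1) = ((N-1-i : ℕ):ℝ) := by
        have h1 : (1:ℕ) ≤ N := by omega
        have h2 : i ≤ N - 1 := by omega
        push_cast [Nat.cast_sub h1, Nat.cast_sub h2]
        ring
      rw [hcast, coeff_Eser, Ring.choose_natCast]
      have : (N-1-i).choose (N-i) = 0 := Nat.choose_eq_zero_of_lt (by omega)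
      rw [this]
      simp
    · subst h
      rw [if_pos le_rfl, if_pos rfl, Nat.sub_self, coeff_Eser,
        show -((i:ℕ):ℝ) + ((i:ℝ) + -1) = -1 from by ring, rc_neg_one]
      simp
    · rw [if_neg (by omega), if_neg (by omega)]
  rw [Polynomial.aeval_eq_sum_range (x := psi c), Finset.sum_mul, map_sum]
  have hterm : ∀ i, PowerSeries.coeff N (q.coeff i • (psi c)^i * (Eser c (N:ℝ) * Eser c (-1)))
      = q.coeff i * (if i = N then 1 else 0) := fun i => by
    rw [smul_mul_assoc, PowerSeries.coeff_smul, smul_eq_mul, hco]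
  simp only [hterm, mul_ite, mul_one, mul_zero]
  rw [Finset.sum_ite_eq' (range (q.natDegree + 1)) N (fun i => q.coeff i)]
  split_ifs with h
  · rfl
  · rw [Polynomial.coeff_eq_zero_of_natDegree_lt]
    simp only [mem_range, not_lt] at h
    omega

lemma Eser_zero_alpha (x : ℝ) : Eser 0 x = 1 := by
  ext n
  rw [coeff_Eser, PowerSeries.coeff_one]
  cases n with
  | zero => simp [Ring.choose_zero_right]
  | succ n => simp

lemma coeff_mul3 (F G H : PowerSeries ℝ) (N : ℕ) :
    PowerSeries.coeff N (F*G*H)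
      = ∑ k ∈ range (N+1), ∑ l ∈ range (N-k+1),
          PowerSeries.coeff k F * PowerSeries.coeff l G * PowerSeries.coeff (N-k-l) H := by
  rw [PowerSeries.coeff_mul, Finset.Nat.sum_antidiagonal_eq_sum_range_succ_mk]
  set T : ℕ → ℕ → ℝ := fun k l =>
    PowerSeries.coeff k F * PowerSeries.coeff l G * PowerSeries.coeff (N-k-l) H with hT
  have h1 : ∀ n ∈ range (N+1),
      PowerSeries.coeff n (F*G) * PowerSeries.coeff (N-n) H
        = ∑ k ∈ range (n+1), T k (n-k) := by
    intro n hn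
    rw [PowerSeries.coeff_mul, Finset.Nat.sum_antidiagonal_eq_sum_range_succ_mk, sum_mul]
    refine sum_congr rfl fun k hk => ?_
    have hkn : k ≤ n := Nat.lt_succ_iff.mp (mem_range.mp hk)
    rw [hT]
    simp only []
    rw [show N - k - (n - k) = N - n from by omega]
  rw [sum_congr rfl h1, sum_tri N T]

theorem stmt2 (m₁ m₂ : ℕ) (b : ℝ) (hb0 : b ≠ 0) (hb1 : b ≠ -1) :
    ∑ k ∈ Finset.range (m₁ + 1), ∑ l ∈ Finset.range (m₁ - k + 1),
        ((m₂ + l).choose m₂ : ℝ) * (-1) ^ k * gchoose ((m₁ + m₂ + 1 : ℝ) / 2) k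
          * (1 - b) ^ k * (1 + b) ^ (-(l : ℤ))
      = b ^ m₁ * ∑ k ∈ Finset.range (m₁ + 1), ∑ l ∈ Finset.range (m₁ - k + 1),
          ((m₂ + l).choose m₂ : ℝ) * gchoose ((m₁ + m₂ + 1 : ℝ) / 2) k
            * (1 - b) ^ k * (1 + b) ^ (-(l : ℤ)) * b ^ ((l : ℤ) - (k : ℤ)) := by
  have hB1 : (1 + b) ≠ 0 := fun h => hb1 (by linarith)
  set p : ℝ := (m₁ + m₂ + 1 : ℝ) / 2 with hp
  set c : ℝ := 1 - b with hc
  set F₁ := Eser (-c) p with hF1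
  set F₂ := Eser (-(1+b)⁻¹) (-(m₂:ℝ)-1) with hF2
  set F₃ := Eser (-1 : ℝ) (-1 : ℝ) with hF3
  set Bser := Eser c p * Eser (-(b^2) * (1+b)⁻¹) (-(m₂:ℝ)-1) * Eser (-b) (-1 : ℝ) with hBser
  -- Step A : LHS = coeff m₁ (F₁ * F₂ * F₃)
  have stepA : (∑ k ∈ Finset.range (m₁ + 1), ∑ l ∈ Finset.range (m₁ - k + 1),
        ((m₂ + l).choose m₂ : ℝ) * (-1) ^ k * gchoose p k * c ^ k * (1 + b) ^ (-(l : ℤ)))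
      = PowerSeries.coeff m₁ (F₁ * F₂ * F₃) := by
    rw [coeff_mul3]
    refine sum_congr rfl fun k hk => sum_congr rfl fun l hl => ?_
    rw [hF1, hF2, hF3, coeff_Eser, coeff_Eser, coeff_Eser, gchoose_eq]
    have e1 : (1+b) ^ (-(l:ℤ)) = ((1+b)⁻¹)^l := by
      rw [zpow_neg, zpow_natCast, inv_pow]
    have e2 : Ring.choose (-(m₂:ℝ)-1) l * (-(1+b)⁻¹)^l = ((m₂+l).choose m₂ : ℝ) * ((1+b)⁻¹)^l := by
      rw [rc_neg_succ, neg_pow ((1+b)⁻¹) l]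
      have h4 : ((-1:ℝ))^l * (-1)^l = 1 := by rw [← mul_pow]; norm_num
      linear_combination (((m₂+l).choose m₂ : ℝ) * ((1+b)⁻¹)^l) * h4
    have e3 : Ring.choose (-1:ℝ) (m₁-k-l) * (-1:ℝ)^(m₁-k-l) = 1 := by
      rw [rc_neg_one, ← mul_pow]; norm_num
    have e4 : (-c)^k = (-1:ℝ)^k * c^k := by rw [neg_pow]
    rw [e1, e2, e3, e4, mul_one]
    ring
  -- Step C : RHS = coeff m₁ Bser
  have stepC : (b ^ m₁ * ∑ k ∈ Finset.range (m₁ + 1), ∑ l ∈ Finset.range (m₁ - k + 1),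
        ((m₂ + l).choose m₂ : ℝ) * gchoose p k * c ^ k * (1 + b) ^ (-(l : ℤ)) * b ^ ((l : ℤ) - (k : ℤ)))
      = PowerSeries.coeff m₁ Bser := by
    rw [hBser, coeff_mul3, Finset.mul_sum]
    refine sum_congr rfl fun k hk => ?_
    rw [Finset.mul_sum]
    refine sum_congr rfl fun l hl => ?_
    have hkm : k ≤ m₁ := Nat.lt_succ_iff.mp (mem_range.mp hk)
    have hlm : l ≤ m₁ - k := Nat.lt_succ_iff.mp (mem_range.mp hl)
    have hklm : k + l ≤ m₁ := by omega
    rw [coeff_Eser, coeff_Eser, coeff_Eser, gchoose_eq]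
    have e1 : (1+b) ^ (-(l:ℤ)) = ((1+b)⁻¹)^l := by
      rw [zpow_neg, zpow_natCast, inv_pow]
    have e2 : Ring.choose (-(m₂:ℝ)-1) l * (-(b^2) * (1+b)⁻¹)^l
        = ((m₂+l).choose m₂ : ℝ) * ((b^2)^l * ((1+b)⁻¹)^l) := by
      rw [rc_neg_succ, neg_mul, neg_pow (b^2 * (1+b)⁻¹) l, mul_pow]
      have h4 : ((-1:ℝ))^l * (-1)^l = 1 := by rw [← mul_pow]; norm_num
      linear_combination (((m₂+l).choose m₂ : ℝ) * ((b^2)^l * ((1+b)⁻¹)^l)) * h4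
    have e3 : Ring.choose (-1:ℝ) (m₁-k-l) * (-b:ℝ)^(m₁-k-l) = b^(m₁-k-l) := by
      rw [rc_neg_one, ← mul_pow]; norm_num
    have e5 : b ^ m₁ * b ^ ((l:ℤ) - (k:ℤ)) = b ^ (2*l + (m₁ - k - l)) := by
      have h1 : ((2*l + (m₁-k-l) : ℕ) : ℤ) = (m₁ : ℤ) + ((l:ℤ) - (k:ℤ)) := by push_cast; omega
      rw [← zpow_natCast b m₁, ← zpow_add₀ hb0, ← zpow_natCast b (2*l + (m₁-k-l)), h1]
    rw [e1, e2, e3]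
    linear_combination (((m₂ + l).choose m₂ : ℝ) * Ring.choose p k * c ^ k * ((1+b)⁻¹)^l) * e5
  -- Step B : coeff m₁ (F₁*F₂*F₃) = coeff m₁ Bser
  have hqc : ∀ (F : PowerSeries ℝ), ∀ i ≤ m₁,
      PowerSeries.coeff i ((PowerSeries.trunc (m₁+1) F : Polynomial ℝ) : PowerSeries ℝ)
        = PowerSeries.coeff i F := by
    intro F i hi
    rw [Polynomial.coeff_coe, PowerSeries.coeff_trunc, if_pos (by omega)]
  have h12 := coeff_mul_congr m₁ _ F₁ _ F₂ (hqc F₁) (hqc F₂)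
  have h123 := coeff_mul_congr m₁ _ (F₁*F₂) _ F₃ h12 (hqc F₃)
  have hA1 : PowerSeries.coeff m₁ (F₁*F₂*F₃)
      = (PowerSeries.trunc (m₁+1) F₁ * PowerSeries.trunc (m₁+1) F₂
          * PowerSeries.trunc (m₁+1) F₃).coeff m₁ := by
    rw [← h123 m₁ le_rfl, ← Polynomial.coeff_coe, Polynomial.coe_mul, Polynomial.coe_mul]
  have hA2 := (key c m₁ (PowerSeries.trunc (m₁+1) F₁ * PowerSeries.trunc (m₁+1) F₂
      * PowerSeries.trunc (m₁+1) F₃)).symm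
  have hmul : Polynomial.aeval (psi c) (PowerSeries.trunc (m₁+1) F₁
        * PowerSeries.trunc (m₁+1) F₂ * PowerSeries.trunc (m₁+1) F₃)
      = Polynomial.aeval (psi c) (PowerSeries.trunc (m₁+1) F₁)
        * Polynomial.aeval (psi c) (PowerSeries.trunc (m₁+1) F₂)
        * Polynomial.aeval (psi c) (PowerSeries.trunc (m₁+1) F₃) := by
    rw [map_mul, map_mul]
  have hH1 : ∀ j ≤ m₁, PowerSeries.coeff j (Polynomial.aeval (psi c) (PowerSeries.trunc (m₁+1) F₁))
      = PowerSeries.coeff j (Eser 0 p * Eser c (-p)) := by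
    intro j hj
    have h := factor_comp c (-c) p m₁ j hj
    rw [show -c + c = (0:ℝ) from by ring] at h
    rw [hF1]
    exact h
  have hH2 : ∀ j ≤ m₁, PowerSeries.coeff j (Polynomial.aeval (psi c) (PowerSeries.trunc (m₁+1) F₂))
      = PowerSeries.coeff j (Eser (-(b^2) * (1+b)⁻¹) (-(m₂:ℝ)-1) * Eser c ((m₂:ℝ)+1)) := by
    intro j hj
    have h := factor_comp c (-(1+b)⁻¹) (-(m₂:ℝ)-1) m₁ j hj
    rw [show -(1+b)⁻¹ + c = -(b^2) * (1+b)⁻¹ from by rw [hc]; field_simp; ring,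
      show -(-(m₂:ℝ)-1) = (m₂:ℝ)+1 from by ring] at h
    rw [hF2]
    exact h
  have hH3 : ∀ j ≤ m₁, PowerSeries.coeff j (Polynomial.aeval (psi c) (PowerSeries.trunc (m₁+1) F₃))
      = PowerSeries.coeff j (Eser (-b) (-1) * Eser c 1) := by
    intro j hj
    have h := factor_comp c (-1) (-1 : ℝ) m₁ j hj
    rw [show (-1 : ℝ) + c = -b from by rw [hc]; ring,
      show -(-1 : ℝ) = (1:ℝ) from by ring] at h
    rw [hF3]
    exact h
  have hH12 := coeff_mul_congr m₁ _ _ _ _ hH1 hH2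
  have hH123 := coeff_mul_congr m₁ _ _ _ _ hH12 hH3
  have hfin := coeff_mul_congr m₁ _ _ (Eser c (m₁:ℝ) * Eser c (-1)) (Eser c (m₁:ℝ) * Eser c (-1))
    hH123 (fun _ _ => rfl) m₁ le_rfl
  have halg : (Eser 0 p * Eser c (-p)) * (Eser (-(b^2) * (1+b)⁻¹) (-(m₂:ℝ)-1) * Eser c ((m₂:ℝ)+1))
        * (Eser (-b) (-1) * Eser c 1) * (Eser c (m₁:ℝ) * Eser c (-1)) = Bser := by
    rw [Eser_zero_alpha, one_mul]
    have hre : Eser c (-p) * (Eser (-(b^2) * (1+b)⁻¹) (-(m₂:ℝ)-1) * Eser c ((m₂:ℝ)+1))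
          * (Eser (-b) (-1) * Eser c 1) * (Eser c (m₁:ℝ) * Eser c (-1))
        = Eser c (-p) * Eser c ((m₂:ℝ)+1) * Eser c 1 * Eser c (m₁:ℝ) * Eser c (-1)
          * (Eser (-(b^2) * (1+b)⁻¹) (-(m₂:ℝ)-1) * Eser (-b) (-1)) := by ring
    rw [hre, Eser_mul, Eser_mul, Eser_mul, Eser_mul,
      show -p + ((m₂:ℝ)+1) + 1 + (m₁:ℝ) + (-1) = p from by rw [hp]; ring, hBser]
    ring
  rw [stepA, stepC, hA1, hA2, hmul, hfin, halg]
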